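/- Fix an integer r ≥ 1 and θ ∈ ℝ. If λ ∈ ℝ is an eigenvalue of the r×r Hermitian matrix Δ_θ^r, then tr(T_λ^r) = 2cos θ, where T_λ = [[λ, −1], [1, 0]] is the 2×2 transfer matrix and T_λ^r its r-th matrix power. -/

import Mathlib

/-- The r×r matrix Δ_θ^r: ones on the off-diagonals, with twisted corner entries
e^{-iθ} (top-right) and e^{iθ} (bottom-left).  For r = 1 this gives (2cos θ) and for
r = 2 it gives [[0, 1+e^{-iθ}],[1+e^{iθ}, 0]]. -/
noncomputable def deltaMatrix (r : ℕ) (θ : ℝ) : Matrix (Fin r) (Fin r) ℂ :=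
  Matrix.of fun j k =>
    (if (j : ℤ) - (k : ℤ) = 1 ∨ (k : ℤ) - (j : ℤ) = 1 then 1 else 0)
    + (if (j : ℕ) = 0 ∧ (k : ℕ) = r - 1 then Complex.exp (-(Complex.I * (θ : ℂ))) else 0)
    + (if (j : ℕ) = r - 1 ∧ (k : ℕ) = 0 then Complex.exp (Complex.I * (θ : ℂ)) else 0)

lemma deltaMatrix_mulVec_apply (r : ℕ) (hr : 1 ≤ r) (θ : ℝ) (v : Fin r → ℂ) (j : Fin r) :
    (deltaMatrix r θ).mulVec v j =
      (if 1 ≤ (j:ℕ) then v ⟨(j:ℕ) - 1, Nat.lt_of_le_of_lt (Nat.sub_le _ _) j.isLt⟩ else 0)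
      + (if h : (j:ℕ) + 1 < r then v ⟨(j:ℕ) + 1, h⟩ else 0)
      + (if (j:ℕ) = 0 then Complex.exp (-(Complex.I * θ)) * v ⟨r - 1, Nat.sub_lt hr one_pos⟩ else 0)
      + (if (j:ℕ) = r - 1 then Complex.exp (Complex.I * θ) * v ⟨0, hr⟩ else 0) := by
  classical
  have s1 : (∑ k : Fin r, if (j:ℤ) - (k:ℤ) = 1 then v k else 0)
      = (if 1 ≤ (j:ℕ) then v ⟨(j:ℕ) - 1, Nat.lt_of_le_of_lt (Nat.sub_le _ _) j.isLt⟩ else 0) := by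
    by_cases hj : 1 ≤ (j:ℕ)
    · rw [if_pos hj]
      have hc : ∀ k : Fin r, ((j:ℤ) - (k:ℤ) = 1)
          ↔ k = ⟨(j:ℕ) - 1, Nat.lt_of_le_of_lt (Nat.sub_le _ _) j.isLt⟩ := by
        intro k
        rw [Fin.ext_iff]
        simp only [Fin.val_mk]
        omega
      simp only [hc]
      simp
    · rw [if_neg hj]
      apply Finset.sum_eq_zero
      intro k _
      rw [if_neg]
      omega
  have s2 : (∑ k : Fin r, if (k:ℤ) - (j:ℤ) = 1 then v k else 0)
      = (if h : (j:ℕ) + 1 < r then v ⟨(j:ℕ) + 1, h⟩ else 0) := by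
    by_cases hj : (j:ℕ) + 1 < r
    · rw [dif_pos hj]
      have hc : ∀ k : Fin r, ((k:ℤ) - (j:ℤ) = 1) ↔ k = ⟨(j:ℕ) + 1, hj⟩ := by
        intro k
        rw [Fin.ext_iff]
        simp only [Fin.val_mk]
        omega
      simp only [hc]
      simp
    · rw [dif_neg hj]
      apply Finset.sum_eq_zero
      intro k _
      rw [if_neg]
      have := k.isLt
      omega
  have s3 : (∑ k : Fin r, if (j:ℕ) = 0 ∧ (k:ℕ) = r - 1 then Complex.exp (-(Complex.I * θ)) * v k else 0)
      = (if (j:ℕ) = 0 then Complex.exp (-(Complex.I * θ)) * v ⟨r - 1, Nat.sub_lt hr one_pos⟩ else 0) := by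
    by_cases hj : (j:ℕ) = 0
    · rw [if_pos hj]
      have hc : ∀ k : Fin r, ((j:ℕ) = 0 ∧ (k:ℕ) = r - 1) ↔ k = ⟨r - 1, Nat.sub_lt hr one_pos⟩ := by
        intro k
        rw [Fin.ext_iff]
        simp only [Fin.val_mk]
        omega
      simp only [hc]
      simp
    · rw [if_neg hj]
      apply Finset.sum_eq_zero
      intro k _
      rw [if_neg]
      tauto
  have s4 : (∑ k : Fin r, if (j:ℕ) = r - 1 ∧ (k:ℕ) = 0 then Complex.exp (Complex.I * θ) * v k else 0)
      = (if (j:ℕ) = r - 1 then Complex.exp (Complex.I * θ) * v ⟨0, hr⟩ else 0) := by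
    by_cases hj : (j:ℕ) = r - 1
    · rw [if_pos hj]
      have hc : ∀ k : Fin r, ((j:ℕ) = r - 1 ∧ (k:ℕ) = 0) ↔ k = ⟨0, hr⟩ := by
        intro k
        rw [Fin.ext_iff]
        simp only [Fin.val_mk]
        omega
      simp only [hc]
      simp
    · rw [if_neg hj]
      apply Finset.sum_eq_zero
      intro k _
      rw [if_neg]
      tauto
  have hsplit : ∀ k : Fin r,
      (if (j:ℤ) - (k:ℤ) = 1 ∨ (k:ℤ) - (j:ℤ) = 1 then v k else 0)
        = (if (j:ℤ) - (k:ℤ) = 1 then v k else 0) + (if (k:ℤ) - (j:ℤ) = 1 then v k else 0) := by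
    intro k
    by_cases h1 : (j:ℤ) - (k:ℤ) = 1 <;> by_cases h2 : (k:ℤ) - (j:ℤ) = 1 <;>
      simp [h1, h2] <;> omega
  simp only [Matrix.mulVec, dotProduct, deltaMatrix, Matrix.of_apply, add_mul, ite_mul,
    one_mul, zero_mul]
  rw [Finset.sum_add_distrib, Finset.sum_add_distrib]
  simp only [hsplit]
  rw [Finset.sum_add_distrib, s1, s2, s3, s4]


/-- The auxiliary twisted-periodic extension of an eigenvector. -/
noncomputable def uSeq (r : ℕ) (hr : 0 < r) (θ : ℝ) (v : Fin r → ℂ) (n : ℕ) : ℂ :=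
  Complex.exp (Complex.I * θ) ^ (n / r) * v ⟨n % r, Nat.mod_lt n hr⟩

lemma uSeq_add_r (r : ℕ) (hr : 0 < r) (θ : ℝ) (v : Fin r → ℂ) (n : ℕ) :
    uSeq r hr θ v (n + r) = Complex.exp (Complex.I * θ) * uSeq r hr θ v n := by
  unfold uSeq
  have h1 : (n + r) / r = n / r + 1 := Nat.add_div_right n hr
  have h2 : (⟨(n + r) % r, Nat.mod_lt _ hr⟩ : Fin r) = ⟨n % r, Nat.mod_lt n hr⟩ := by
    apply Fin.ext
    simp [Nat.add_mod_right]
  rw [h1, h2, pow_succ]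
  ring

lemma uSeq_lt (r : ℕ) (hr : 0 < r) (θ : ℝ) (v : Fin r → ℂ) (n : ℕ) (hn : n < r) :
    uSeq r hr θ v n = v ⟨n, hn⟩ := by
  unfold uSeq
  have h1 : n / r = 0 := Nat.div_eq_of_lt hn
  have h2 : (⟨n % r, Nat.mod_lt _ hr⟩ : Fin r) = ⟨n, hn⟩ := by
    apply Fin.ext
    simp [Nat.mod_eq_of_lt hn]
  rw [h1, h2, pow_zero, one_mul]

lemma uSeq_rec (r : ℕ) (hr : 0 < r) (θ t : ℝ) (v : Fin r → ℂ)
    (hvv : ∀ j, (deltaMatrix r θ).mulVec v j = (t : ℂ) * v j) (n : ℕ) :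
    uSeq r hr θ v n + uSeq r hr θ v (n + 2) = (t : ℂ) * uSeq r hr θ v (n + 1) := by
  set e : ℂ := Complex.exp (Complex.I * θ) with he
  have hinv : e * e⁻¹ = 1 := mul_inv_cancel₀ (Complex.exp_ne_zero _)
  have hEq : ∀ j : Fin r,
      (if 1 ≤ (j:ℕ) then v ⟨(j:ℕ) - 1, Nat.lt_of_le_of_lt (Nat.sub_le _ _) j.isLt⟩ else 0)
      + (if h : (j:ℕ) + 1 < r then v ⟨(j:ℕ) + 1, h⟩ else 0)
      + (if (j:ℕ) = 0 then Complex.exp (-(Complex.I * θ)) * v ⟨r - 1, Nat.sub_lt hr one_pos⟩ else 0)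
      + (if (j:ℕ) = r - 1 then e * v ⟨0, hr⟩ else 0) = (t : ℂ) * v j :=
    fun j => (deltaMatrix_mulVec_apply r hr θ v j).symm.trans (hvv j)
  induction n using Nat.strong_induction_on with
  | _ n ih =>
    rcases lt_or_ge n r with hn | hn
    · -- base cases: n < r
      rcases eq_or_lt_of_le (show 1 ≤ r from hr) with hr1 | hr2
      · -- r = 1
        have hr1' : r = 1 := hr1.symm
        subst hr1'
        interval_cases n
        all_goals {
          have h := hEq ⟨0, hr⟩
          rw [if_neg (by simp), dif_neg (by simp), if_pos rfl, if_pos rfl,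
            Complex.exp_neg] at h
          simp only [uSeq, Nat.div_one, Nat.mod_one]
          rw [← he] at h ⊢
          linear_combination e * h - v ⟨0, Nat.mod_lt 0 hr⟩ * hinv
        }
      · -- r ≥ 2
        by_cases hc1 : n + 2 < r
        · -- interior
          have h := hEq ⟨n + 1, by omega⟩
          rw [if_pos (show 1 ≤ n + 1 by omega), dif_pos (show n + 1 + 1 < r by omega),
            if_neg (show ¬ (n + 1 = 0) by omega), if_neg (show ¬ (n + 1 = r - 1) by omega)] at h
          have h' : v ⟨n, by omega⟩ + v ⟨n + 2, by omega⟩ + 0 + 0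
              = (t : ℂ) * v ⟨n + 1, by omega⟩ := h
          rw [uSeq_lt _ _ _ _ n (by omega), uSeq_lt _ _ _ _ (n + 2) (by omega),
            uSeq_lt _ _ _ _ (n + 1) (by omega)]
          linear_combination h'
        · by_cases hc2 : n + 2 = r
          · have h := hEq ⟨n + 1, by omega⟩
            rw [if_pos (show 1 ≤ n + 1 by omega), dif_neg (show ¬ (n + 1 + 1 < r) by omega),
              if_neg (show ¬ (n + 1 = 0) by omega), if_pos (show n + 1 = r - 1 by omega)] at h
            have h' : v ⟨n, by omega⟩ + 0 + 0 + e * v ⟨0, hr⟩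
                = (t : ℂ) * v ⟨n + 1, by omega⟩ := h
            have hu2 : uSeq r hr θ v (n + 2) = e * v ⟨0, hr⟩ := by
              rw [show n + 2 = 0 + r by omega, uSeq_add_r, uSeq_lt _ _ _ _ 0 hr, ← he]
            rw [uSeq_lt _ _ _ _ n (by omega), uSeq_lt _ _ _ _ (n + 1) (by omega), hu2]
            linear_combination h'
          · -- n + 1 = r
            have h := hEq ⟨0, hr⟩
            rw [if_neg (show ¬ (1 ≤ 0) by omega), dif_pos (show 0 + 1 < r by omega),
              if_pos rfl, if_neg (show ¬ ((0:ℕ) = r - 1) by omega), Complex.exp_neg, ← he] at h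
            have h' : 0 + v ⟨1, hr2⟩ + e⁻¹ * v ⟨r - 1, Nat.sub_lt hr one_pos⟩ + 0
                = (t : ℂ) * v ⟨0, hr⟩ := h
            have hu0 : uSeq r hr θ v n = v ⟨r - 1, Nat.sub_lt hr one_pos⟩ := by
              rw [show n = r - 1 by omega]
              exact uSeq_lt _ _ _ _ _ _
            have hu1 : uSeq r hr θ v (n + 1) = e * v ⟨0, hr⟩ := by
              rw [show n + 1 = 0 + r by omega, uSeq_add_r, uSeq_lt _ _ _ _ 0 hr, ← he]
            have hu2 : uSeq r hr θ v (n + 2) = e * v ⟨1, hr2⟩ := by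
              rw [show n + 2 = 1 + r by omega, uSeq_add_r, uSeq_lt _ _ _ _ 1 hr2, ← he]
            rw [hu0, hu1, hu2]
            linear_combination e * h' - v ⟨r - 1, Nat.sub_lt hr one_pos⟩ * hinv
    · -- inductive step via periodicity
      have hm := ih (n - r) (by omega)
      have h1 : n = (n - r) + r := by omega
      rw [h1, show (n - r) + r + 2 = ((n - r) + 2) + r by ring,
        show (n - r) + r + 1 = ((n - r) + 1) + r by ring,
        uSeq_add_r, uSeq_add_r, uSeq_add_r, ← he]
      linear_combination e * hm

lemma seq_all_zero (t : ℂ) (u : ℕ → ℂ) (hu : ∀ n, u n + u (n + 2) = t * u (n + 1))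
    (h0 : u 0 = 0) (h1 : u 1 = 0) : ∀ n, u n = 0 := by
  intro n
  induction n using Nat.strong_induction_on with
  | _ n ih =>
    match n with
    | 0 => exact h0
    | 1 => exact h1
    | (m + 2) =>
      have ha := ih m (by omega)
      have hb := ih (m + 1) (by omega)
      linear_combination hu m + t * hb - ha

lemma transfer_pow_mulVec (t : ℂ) (u : ℕ → ℂ)
    (hu : ∀ n, u n + u (n + 2) = t * u (n + 1)) (n : ℕ) :
    ((!![t, -1; 1, 0] : Matrix (Fin 2) (Fin 2) ℂ) ^ n).mulVec ![u 1, u 0]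
      = ![u (n + 1), u n] := by
  induction n with
  | zero => simp [Matrix.one_mulVec]
  | succ n ih =>
    rw [pow_succ', ← Matrix.mulVec_mulVec, ih]
    funext i
    fin_cases i <;>
      simp [Matrix.mulVec, dotProduct, Fin.sum_univ_two]
    · linear_combination - hu n

/-- if λ ∈ ℝ is an eigenvalue of Δ_θ^r, then tr(T_λ^r) = 2cos θ, where
T_λ = [[λ, −1], [1, 0]]. -/
theorem trace_transfer_pow_of_eigenvalue (r : ℕ) (hr : 1 ≤ r) (θ t : ℝ)
    (ht : (t : ℂ) ∈ spectrum ℂ (deltaMatrix r θ)) :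
    Matrix.trace ((!![t, -1; 1, 0] : Matrix (Fin 2) (Fin 2) ℝ) ^ r) =
      2 * Real.cos θ := by
  classical
  set e : ℂ := Complex.exp (Complex.I * θ) with he
  have hene : e ≠ 0 := Complex.exp_ne_zero _
  rw [spectrum.mem_iff] at ht
  have hdet : (algebraMap ℂ (Matrix (Fin r) (Fin r) ℂ) (t : ℂ) - deltaMatrix r θ).det = 0 := by
    by_contra hcon
    exact ht ((Matrix.isUnit_iff_isUnit_det _).mpr (isUnit_iff_ne_zero.mpr hcon))
  obtain ⟨v, hv0, hv⟩ := Matrix.exists_mulVec_eq_zero_iff.mpr hdet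
  have hvv : ∀ j, (deltaMatrix r θ).mulVec v j = (t : ℂ) * v j := by
    intro j
    have h1 := congrFun hv j
    rw [Matrix.sub_mulVec] at h1
    have h2 : (algebraMap ℂ (Matrix (Fin r) (Fin r) ℂ) (t : ℂ)).mulVec v j = (t : ℂ) * v j := by
      rw [Matrix.algebraMap_eq_diagonal]
      simp [Matrix.mulVec_diagonal]
    rw [Pi.sub_apply, h2, Pi.zero_apply] at h1
    linear_combination -h1
  have hrec := uSeq_rec r hr θ t v hvv
  set u := uSeq r hr θ v with hu
  have hw : ¬ (u 1 = 0 ∧ u 0 = 0) := by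
    rintro ⟨h1, h0⟩
    apply hv0
    funext j
    have hz := seq_all_zero (t : ℂ) u hrec h0 h1 (j : ℕ)
    rw [hu, uSeq_lt _ _ _ _ _ j.isLt] at hz
    simpa using hz
  have hTr := transfer_pow_mulVec (t : ℂ) u hrec r
  have h1r : u (r + 1) = e * u 1 := by
    rw [hu, show r + 1 = 1 + r by ring, uSeq_add_r, ← he]
  have h0r : u r = e * u 0 := by
    have h6 := uSeq_add_r r hr θ v 0
    rw [Nat.zero_add, ← he] at h6
    exact h6
  set M := (!![(t : ℂ), -1; 1, 0]) ^ r with hM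
  have key : M.mulVec ![u 1, u 0] = e • ![u 1, u 0] := by
    rw [hM, hTr, h1r, h0r]
    funext i
    fin_cases i <;> simp
  have hdet1 : M.det = 1 := by
    rw [hM, Matrix.det_pow]
    simp [Matrix.det_fin_two_of]
  have hsing : (M - e • 1).det = 0 := by
    rw [← Matrix.exists_mulVec_eq_zero_iff]
    refine ⟨![u 1, u 0], ?_, ?_⟩
    · intro hcon
      apply hw
      constructor
      · simpa using congrFun hcon 0
      · simpa using congrFun hcon 1
    · rw [Matrix.sub_mulVec, key, Matrix.smul_mulVec, Matrix.one_mulVec, sub_self]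
  have htr : M.trace = e + e⁻¹ := by
    rw [Matrix.det_fin_two] at hsing
    simp only [Matrix.sub_apply, Matrix.smul_apply, Matrix.one_apply_eq,
      Matrix.one_apply_ne (show (0 : Fin 2) ≠ 1 by decide),
      Matrix.one_apply_ne (show (1 : Fin 2) ≠ 0 by decide), smul_eq_mul, mul_one,
      mul_zero, sub_zero] at hsing
    rw [Matrix.det_fin_two] at hdet1
    rw [Matrix.trace_fin_two]
    apply mul_left_cancel₀ hene
    have h3 : e * (M 0 0 + M 1 1) = 1 + e ^ 2 := by linear_combination hdet1 - hsing
    rw [h3]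
    field_simp
    ring
  have hmap : ((!![t, -1; 1, 0] : Matrix (Fin 2) (Fin 2) ℝ) ^ r).map (Complex.ofReal) = M := by
    have h4 : (Complex.ofRealHom.mapMatrix ((!![t, -1; 1, 0] : Matrix (Fin 2) (Fin 2) ℝ) ^ r))
        = (Complex.ofRealHom.mapMatrix (!![t, -1; 1, 0] : Matrix (Fin 2) (Fin 2) ℝ)) ^ r :=
      map_pow _ _ _
    have h5 : (Complex.ofRealHom.mapMatrix (!![t, -1; 1, 0] : Matrix (Fin 2) (Fin 2) ℝ))
        = (!![(t : ℂ), -1; 1, 0]) := by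
      funext i j
      fin_cases i <;> fin_cases j <;>
        simp [RingHom.mapMatrix_apply, Matrix.map_apply]
    rw [hM, ← h5, ← h4]
    rfl
  have hfinal : ((Matrix.trace ((!![t, -1; 1, 0] : Matrix (Fin 2) (Fin 2) ℝ) ^ r) : ℝ) : ℂ)
      = M.trace := by
    rw [← hmap]
    simp [Matrix.trace, Matrix.diag, Matrix.map_apply]
  apply Complex.ofReal_injective
  rw [hfinal, htr, he, ← Complex.exp_neg]
  push_cast
  rw [mul_comm Complex.I (θ : ℂ), ← neg_mul]
  exact (Complex.two_cos (θ : ℂ)).symm
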